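/- Let p ≥ 5 be a prime with p ≡ 2 (mod 3). Let θ ∈ ℚ_p and q ∈ ℕ satisfy |θ−1|_p < |(q:ℚ_p)|_p < 1 and (θ−1)(1−θ−q) ≠ 0, and let f(x) = ((θx+q−1)/(x+θ+q−2))³ be the Potts–Bethe mapping. Let x⁽¹⁾ = 1 − q + (θ−1)(y⁽¹⁾ − 1), where y⁽¹⁾ is the unique root in ℚ_p of the cubic y³ − (1+θ+θ²)y² − (2θ+1)(1−θ−q)y − (1−θ−q)² = 0. Then |f′(x⁽¹⁾)|_p = |q|_p / |θ−1|_p > 1; that is, x⁽¹⁾ is a repelling fixed point. -/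

import Mathlib

private lemma nad {p : ℕ} [Fact (Nat.Prime p)] {a b : ℚ_[p]}
    (h : ‖b‖ < ‖a‖) : ‖a + b‖ = ‖a‖ := by
  rw [Padic.add_eq_max_of_ne (ne_of_gt h), max_eq_left h.le]

/-- the derivative of the Potts–Bethe mapping at the fixed point
`x⁽¹⁾ = 1 - q + (θ-1)(y⁽¹⁾-1)`, where `y⁽¹⁾` is the unique root of the cubic,
has norm `‖q‖/‖θ-1‖ > 1`, i.e. `x⁽¹⁾` is a repelling fixed point. -/
theorem potts_bethe_repelling_fixed_point (p : ℕ) [Fact (Nat.Prime p)]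
    (hp5 : 5 ≤ p) (hp3 : p % 3 = 2) (θ : ℚ_[p]) (q : ℕ)
    (hθq : ‖θ - 1‖ < ‖(q : ℚ_[p])‖) (hq : ‖(q : ℚ_[p])‖ < 1)
    (hne : (θ - 1) * (1 - θ - (q : ℚ_[p])) ≠ 0)
    (y1 : ℚ_[p])
    (hy1 : y1 ^ 3 - (1 + θ + θ ^ 2) * y1 ^ 2 - (2 * θ + 1) * (1 - θ - (q : ℚ_[p])) * y1
        - (1 - θ - (q : ℚ_[p])) ^ 2 = 0)
    (hy1u : ∀ z : ℚ_[p],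
      z ^ 3 - (1 + θ + θ ^ 2) * z ^ 2 - (2 * θ + 1) * (1 - θ - (q : ℚ_[p])) * z
        - (1 - θ - (q : ℚ_[p])) ^ 2 = 0 → z = y1) :
    ‖deriv (fun x : ℚ_[p] => ((θ * x + (q : ℚ_[p]) - 1) / (x + θ + (q : ℚ_[p]) - 2)) ^ 3)
        (1 - (q : ℚ_[p]) + (θ - 1) * (y1 - 1))‖
      = ‖(q : ℚ_[p])‖ / ‖θ - 1‖ ∧
    1 < ‖(q : ℚ_[p])‖ / ‖θ - 1‖ := by
  have hε : θ - 1 ≠ 0 := fun h => hne (by rw [h, zero_mul])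
  have hεpos : 0 < ‖θ - 1‖ := norm_pos_iff.mpr hε
  have hqpos : 0 < ‖(q : ℚ_[p])‖ := hεpos.trans hθq
  have hε1 : ‖θ - 1‖ < 1 := hθq.trans hq
  -- ‖3‖ = 1
  have h3 : ‖(3 : ℚ_[p])‖ = 1 := by
    have h1 : ¬ ((p : ℤ) ∣ (3 : ℤ)) := by
      intro h
      have h2 : (p : ℤ) ≤ 3 := Int.le_of_dvd (by norm_num) h
      have : (5 : ℤ) ≤ (p : ℤ) := by exact_mod_cast hp5
      omega
    have h2 := (Padic.norm_intCast_lt_one_iff (k := (3 : ℤ))).not.mpr h1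
    have h3' : ‖((3 : ℤ) : ℚ_[p])‖ ≤ 1 := Padic.norm_int_le_one _
    have : ‖((3 : ℤ) : ℚ_[p])‖ = 1 := le_antisymm h3' (not_lt.mp h2)
    exact_mod_cast this
  -- ‖θ‖ = 1
  have hθ1 : ‖θ‖ = 1 := by
    have e : θ = 1 + (θ - 1) := by ring
    rw [e, nad (by rwa [norm_one])]; exact norm_one
  -- ‖θ - 1 + q‖ = ‖q‖
  have hS : ‖θ - 1 + (q : ℚ_[p])‖ = ‖(q : ℚ_[p])‖ := by
    rw [add_comm, nad hθq]
  have hSq : ‖1 - θ - (q : ℚ_[p])‖ = ‖(q : ℚ_[p])‖ := by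
    have e : 1 - θ - (q : ℚ_[p]) = -(θ - 1 + (q : ℚ_[p])) := by ring
    rw [e, norm_neg, hS]
  -- ‖1 + θ + θ²‖ = 1
  have hA : ‖1 + θ + θ ^ 2‖ = 1 := by
    have e : 1 + θ + θ ^ 2 = 3 + (3 * (θ - 1) + (θ - 1) ^ 2) := by ring
    rw [e, nad, h3]
    rw [h3]
    refine lt_of_le_of_lt (Padic.nonarchimedean _ _) (max_lt ?_ ?_)
    · rw [norm_mul, h3, one_mul]; exact hε1
    · rw [pow_two, norm_mul]
      nlinarith [norm_nonneg (θ - 1)]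
  -- coefficient bounds
  have hBle : ‖(2 * θ + 1) * (1 - θ - (q : ℚ_[p]))‖ < 1 := by
    rw [norm_mul, hSq]
    have h2θ : ‖2 * θ + 1‖ ≤ 1 := by
      refine le_trans (Padic.nonarchimedean _ _) (max_le ?_ (by rw [norm_one]))
      rw [norm_mul, hθ1, mul_one]
      exact_mod_cast Padic.norm_int_le_one (2 : ℤ)
    calc ‖2 * θ + 1‖ * ‖(q : ℚ_[p])‖ ≤ 1 * ‖(q : ℚ_[p])‖ := by
          exact mul_le_mul_of_nonneg_right h2θ (norm_nonneg _)
      _ = ‖(q : ℚ_[p])‖ := one_mul _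
      _ < 1 := hq
  have hCle : ‖(1 - θ - (q : ℚ_[p])) ^ 2‖ < 1 := by
    rw [pow_two, norm_mul, hSq]
    nlinarith [norm_nonneg ((q : ℚ_[p]))]
  -- Hensel's lemma: the cubic has a root of norm 1
  set A' : ℤ_[p] := ⟨1 + θ + θ ^ 2, le_of_eq hA⟩ with hA'def
  set B' : ℤ_[p] := ⟨(2 * θ + 1) * (1 - θ - (q : ℚ_[p])), hBle.le⟩ with hB'def
  set C' : ℤ_[p] := ⟨(1 - θ - (q : ℚ_[p])) ^ 2, hCle.le⟩ with hC'def
  set F : Polynomial ℤ_[p] :=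
    Polynomial.X ^ 3 - Polynomial.C A' * Polynomial.X ^ 2 - Polynomial.C B' * Polynomial.X
      - Polynomial.C C' with hFdef
  have heval : F.eval A' = -(B' * A' + C') := by
    simp only [hFdef, Polynomial.eval_sub, Polynomial.eval_mul, Polynomial.eval_pow,
      Polynomial.eval_X, Polynomial.eval_C]
    ring
  have hdeval : F.derivative.eval A' = A' ^ 2 - B' := by
    simp only [hFdef, Polynomial.derivative_sub, Polynomial.derivative_mul,
      Polynomial.derivative_C, Polynomial.derivative_X, Polynomial.derivative_X_pow]
    simp
    ring
  have hdnorm : ‖F.derivative.eval A'‖ = 1 := by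
    rw [hdeval, PadicInt.norm_def]
    push_cast
    have e : ((A' : ℚ_[p]) ^ 2 - (B' : ℚ_[p])) = (1 + θ + θ ^ 2) ^ 2
        + (-((2 * θ + 1) * (1 - θ - (q : ℚ_[p])))) := by
      simp [hA'def, hB'def]; ring
    have hA2 : ‖(1 + θ + θ ^ 2) ^ 2‖ = 1 := by rw [pow_two, norm_mul, hA, one_mul]
    have hlt : ‖-((2 * θ + 1) * (1 - θ - (q : ℚ_[p])))‖ < ‖(1 + θ + θ ^ 2) ^ 2‖ := by
      rw [norm_neg, hA2]; exact hBle
    rw [e, nad hlt, hA2]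
  have hnorm : ‖F.eval A'‖ < ‖F.derivative.eval A'‖ ^ 2 := by
    rw [heval, hdnorm, one_pow, norm_neg, PadicInt.norm_def]
    push_cast
    refine lt_of_le_of_lt (Padic.nonarchimedean _ _) (max_lt ?_ ?_)
    · rw [norm_mul]
      calc ‖(B' : ℚ_[p])‖ * ‖(A' : ℚ_[p])‖ ≤ ‖(B' : ℚ_[p])‖ * 1 := by
            exact mul_le_mul_of_nonneg_left (le_of_eq hA) (norm_nonneg _)
        _ = ‖(B' : ℚ_[p])‖ := mul_one _
        _ < 1 := hBle
    · exact hCle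
  obtain ⟨z, hz0, hzA, -, -⟩ := hensels_lemma hnorm
  have hznorm : ‖(z : ℚ_[p])‖ = 1 := by
    have e : (z : ℚ_[p]) = (A' : ℚ_[p]) + ((z : ℚ_[p]) - (A' : ℚ_[p])) := by ring
    rw [e, nad]
    · exact hA
    · rw [hA]
      have : ‖(z - A' : ℤ_[p])‖ < 1 := by rwa [Polynomial.coe_aeval_eq_eval, hdnorm] at hzA
      rwa [PadicInt.norm_def, PadicInt.coe_sub] at this
  have hzroot : (z : ℚ_[p]) ^ 3 - (1 + θ + θ ^ 2) * (z : ℚ_[p]) ^ 2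
      - (2 * θ + 1) * (1 - θ - (q : ℚ_[p])) * (z : ℚ_[p]) - (1 - θ - (q : ℚ_[p])) ^ 2 = 0 := by
    have h0 : z ^ 3 - A' * z ^ 2 - B' * z - C' = 0 := by
      have := hz0
      simp only [hFdef, Polynomial.coe_aeval_eq_eval, Polynomial.eval_sub, Polynomial.eval_mul, Polynomial.eval_pow,
        Polynomial.eval_X, Polynomial.eval_C] at this
      exact this
    have := congrArg (fun t : ℤ_[p] => (t : ℚ_[p])) h0
    push_cast at this
    exact this
  have hy1z : (z : ℚ_[p]) = y1 := hy1u _ hzroot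
  have hy1norm : ‖y1‖ = 1 := by rw [← hy1z]; exact hznorm
  have hy1ne : y1 ≠ 0 := by intro h; rw [h, norm_zero] at hy1norm; norm_num at hy1norm
  -- derivative computation
  set x₀ : ℚ_[p] := 1 - (q : ℚ_[p]) + (θ - 1) * (y1 - 1) with hx₀def
  have hDval : x₀ + θ + (q : ℚ_[p]) - 2 = (θ - 1) * y1 := by rw [hx₀def]; ring
  have hD₀ne : x₀ + θ + (q : ℚ_[p]) - 2 ≠ 0 := by
    rw [hDval]; exact mul_ne_zero hε hy1ne
  have hN : HasDerivAt (fun x : ℚ_[p] => θ * x + (q : ℚ_[p]) - 1) θ x₀ := by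
    simpa using (((hasDerivAt_id x₀).const_mul θ).add_const (q : ℚ_[p])).sub_const 1
  have hDd : HasDerivAt (fun x : ℚ_[p] => x + θ + (q : ℚ_[p]) - 2) 1 x₀ := by
    simpa using (((hasDerivAt_id x₀).add_const θ).add_const (q : ℚ_[p])).sub_const 2
  have hdiv := hN.div hDd hD₀ne
  have hpow : HasDerivAt
      (fun x : ℚ_[p] => ((θ * x + (q : ℚ_[p]) - 1) / (x + θ + (q : ℚ_[p]) - 2)) ^ 3)
      ((3 : ℕ) * ((θ * x₀ + (q : ℚ_[p]) - 1) / (x₀ + θ + (q : ℚ_[p]) - 2)) ^ (3 - 1) *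
        ((θ * (x₀ + θ + (q : ℚ_[p]) - 2) - (θ * x₀ + (q : ℚ_[p]) - 1) * 1) /
          (x₀ + θ + (q : ℚ_[p]) - 2) ^ 2)) x₀ := hdiv.pow 3
  rw [hpow.deriv]
  have hNval : θ * x₀ + (q : ℚ_[p]) - 1 = (θ - 1) * (θ * y1 - (θ - 1 + (q : ℚ_[p]))) := by
    rw [hx₀def]; ring
  have hNum2 : θ * (x₀ + θ + (q : ℚ_[p]) - 2) - (θ * x₀ + (q : ℚ_[p]) - 1) * 1
      = (θ - 1) * (θ - 1 + (q : ℚ_[p])) := by rw [hx₀def]; ring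
  have hT : ‖θ * y1 - (θ - 1 + (q : ℚ_[p]))‖ = 1 := by
    rw [sub_eq_add_neg, nad]
    · rw [norm_mul, hθ1, hy1norm, mul_one]
    · rw [norm_neg, hS, norm_mul, hθ1, hy1norm, mul_one]
      exact hq
  have key : ((3 : ℕ) : ℚ_[p]) * ((θ * x₀ + (q : ℚ_[p]) - 1) / (x₀ + θ + (q : ℚ_[p]) - 2)) ^ (3 - 1) *
      ((θ * (x₀ + θ + (q : ℚ_[p]) - 2) - (θ * x₀ + (q : ℚ_[p]) - 1) * 1) /
        (x₀ + θ + (q : ℚ_[p]) - 2) ^ 2)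
      = (3 * (θ - 1 + (q : ℚ_[p])) * (θ * y1 - (θ - 1 + (q : ℚ_[p]))) ^ 2)
        / ((θ - 1) * y1 ^ 4) := by
    rw [hNum2, hNval, hDval]
    push_cast
    field_simp
  rw [key]
  constructor
  · rw [norm_div, norm_mul, norm_mul, norm_mul, norm_pow, norm_pow, hT, h3, hS, hy1norm]
    norm_num
  · rw [lt_div_iff₀ hεpos, one_mul]; exact hθq
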